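/- Splitting of steady states: with notation as in the composite open dynamical system, suppose b ∈ ℝ^{S+_Y S'} satisfies u(b) + (j∘i)_*(I) − (j'∘o')_*(O') = 0, where u = j_* ∘ v ∘ j^* + j'_* ∘ v' ∘ j'^*. Set c = j^*(b) and c' = j'^*(b). Then o^*(c) = i'^*(c') and there exists O ∈ ℝ^Y such that v(c) + i_*(I) − o_*(O) = 0 and v'(c') + i'_*(O) − o'_*(O') = 0. -/
import Mathlib


/-- Pushforward of real-valued functions along a map of finite sets (fiberwise sum). -/
def pushR {S S' : Type*} [Fintype S] [DecidableEq S'] (f : S → S') (c : S → ℝ) : S' → ℝ :=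
  fun σ' => ∑ σ : S, if f σ = σ' then c σ else 0

lemma pushR_comp {S T U : Type*} [Fintype S] [Fintype T] [DecidableEq T] [DecidableEq U]
    (f : S → T) (g : T → U) (c : S → ℝ) :
    pushR (g ∘ f) c = pushR g (pushR f c) := by
  funext u
  simp only [pushR, Function.comp_apply]
  have : ∀ τ : T, (if g τ = u then ∑ σ : S, if f σ = τ then c σ else 0 else 0)
      = ∑ σ : S, if f σ = τ then (if g τ = u then c σ else 0) else 0 := by
    intro τ; split <;> simp
  rw [Finset.sum_congr rfl (fun τ _ => this τ), Finset.sum_comm]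
  apply Finset.sum_congr rfl
  intro σ _
  rw [Finset.sum_ite_eq]
  simp

lemma pushR_add {S T : Type*} [Fintype S] [DecidableEq T] (f : S → T) (c d : S → ℝ) :
    pushR f (c + d) = pushR f c + pushR f d := by
  funext t
  simp only [pushR, Pi.add_apply, ← Finset.sum_add_distrib]
  exact Finset.sum_congr rfl fun _ _ => by split <;> simp

lemma pushR_sub {S T : Type*} [Fintype S] [DecidableEq T] (f : S → T) (c d : S → ℝ) :
    pushR f (c - d) = pushR f c - pushR f d := by
  funext t
  simp only [pushR, Pi.sub_apply, ← Finset.sum_sub_distrib]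
  exact Finset.sum_congr rfl fun _ _ => by split <;> simp

lemma pushR_dual {S T : Type*} [Fintype S] [Fintype T] [DecidableEq T]
    (f : S → T) (c : S → ℝ) (w : T → ℝ) :
    ∑ t, pushR f c t * w t = ∑ s, c s * w (f s) := by
  simp only [pushR, Finset.sum_mul]
  rw [Finset.sum_comm]
  apply Finset.sum_congr rfl
  intro s _
  have : ∀ t : T, (if f s = t then c s else 0) * w t
      = if f s = t then c s * w t else 0 := by
    intro t; split <;> simp
  rw [Finset.sum_congr rfl (fun t _ => this t), Finset.sum_ite_eq]
  simp

/-- Factor a linear functional through a linear map whose kernel it annihilates. -/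
lemma exists_factor {V W : Type*} [AddCommGroup V] [Module ℝ V] [AddCommGroup W] [Module ℝ W]
    (T : V →ₗ[ℝ] W) (f : V →ₗ[ℝ] ℝ) (h : LinearMap.ker T ≤ LinearMap.ker f) :
    ∃ g : W →ₗ[ℝ] ℝ, ∀ x, g (T x) = f x := by
  let g₀ : LinearMap.range T →ₗ[ℝ] ℝ :=
    ((LinearMap.ker T).liftQ f h).comp T.quotKerEquivRange.symm.toLinearMap
  obtain ⟨g, hg⟩ := g₀.exists_extend
  refine ⟨g, fun x => ?_⟩
  have hx : T x ∈ LinearMap.range T := ⟨x, rfl⟩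
  have h1 : g₀ ⟨T x, hx⟩ = g (T x) := by
    have := congrFun (congrArg (fun φ => φ.toFun) hg) ⟨T x, hx⟩
    simpa using this.symm
  have h2 : T.quotKerEquivRange.symm ⟨T x, hx⟩ = Submodule.Quotient.mk x := by
    apply T.quotKerEquivRange.injective
    simp [LinearMap.quotKerEquivRange_apply_mk]
  rw [← h1]
  simp only [g₀, LinearMap.comp_apply, LinearEquiv.coe_toLinearMap, h2]
  exact Submodule.liftQ_apply _ _ _

lemma functional_sum {Y : Type*} [Fintype Y] [DecidableEq Y]
    (g : (Y → ℝ) →ₗ[ℝ] ℝ) (u : Y → ℝ) :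
    g u = ∑ y, u y * g (Pi.single y 1) := by
  have hu : u = ∑ y, u y • (Pi.single y 1 : Y → ℝ) := by
    funext y'
    simp [Pi.single_apply, Finset.sum_ite_eq']
  conv_lhs => rw [hu]
  rw [map_sum]
  simp [smul_eq_mul]

/-- Splitting of steady states: if `b ∈ ℝ^{S+_Y S'}` is a steady state of the composite
open dynamical system with inflows `I` and outflows `O'`, then `c = j^*(b)` and
`c' = j'^*(b)` agree on `Y` and there exists `O ∈ ℝ^Y` making `c` a steady state of the
first system with inflows `I`, outflows `O`, and `c'` a steady state of the second with
inflows `O`, outflows `O'`. -/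
theorem split_steady_states {X Y Z S S' P : Type*}
    [Fintype X] [Fintype Y] [Fintype Z] [Fintype S] [Fintype S'] [Fintype P]
    [DecidableEq S] [DecidableEq S'] [DecidableEq P]
    (i : X → S) (o : Y → S) (i' : Y → S') (o' : Z → S')
    (j : S → P) (j' : S' → P)
    (hcomm : j ∘ o = j' ∘ i')
    (huniv : ∀ {W : Type} (u : S → W) (u' : S' → W), u ∘ o = u' ∘ i' →
      ∃! w : P → W, w ∘ j = u ∧ w ∘ j' = u')
    (v : (S → ℝ) → (S → ℝ)) (v' : (S' → ℝ) → (S' → ℝ))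
    (b : P → ℝ) (I : X → ℝ) (O' : Z → ℝ)
    (hb : (pushR j (v (b ∘ j)) + pushR j' (v' (b ∘ j')))
        + pushR (j ∘ i) I - pushR (j' ∘ o') O' = 0) :
    (b ∘ j) ∘ o = (b ∘ j') ∘ i' ∧
    ∃ O : Y → ℝ,
      v (b ∘ j) + pushR i I - pushR o O = 0 ∧
      v' (b ∘ j') + pushR i' O - pushR o' O' = 0 := by
  classical
  refine ⟨by rw [Function.comp_assoc, Function.comp_assoc, hcomm], ?_⟩
  set a : S → ℝ := v (b ∘ j) + pushR i I with ha
  set a' : S' → ℝ := v' (b ∘ j') - pushR o' O' with ha'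
  have hsum : pushR j a + pushR j' a' = 0 := by
    funext p
    have h := congrFun hb p
    rw [pushR_comp i j, pushR_comp o' j'] at h
    simp only [ha, ha', pushR_add, pushR_sub, Pi.add_apply, Pi.sub_apply, Pi.zero_apply] at h ⊢
    linarith
  let T : ((S → ℝ) × (S' → ℝ)) →ₗ[ℝ] (Y → ℝ) :=
    { toFun := fun uu => fun y => uu.1 (o y) - uu.2 (i' y)
      map_add' := by intro x y; funext w; simp; ring
      map_smul' := by intro c x; funext w; simp; ring }
  let f : ((S → ℝ) × (S' → ℝ)) →ₗ[ℝ] ℝ :=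
    { toFun := fun uu => (∑ s, a s * uu.1 s) + (∑ s', a' s' * uu.2 s')
      map_add' := by
        intro x y
        simp only [Prod.fst_add, Prod.snd_add, Pi.add_apply, mul_add, Finset.sum_add_distrib]
        ring
      map_smul' := by
        intro c x
        simp only [Prod.smul_fst, Prod.smul_snd, Pi.smul_apply, smul_eq_mul, RingHom.id_apply]
        rw [mul_add, Finset.mul_sum, Finset.mul_sum]
        congr 1 <;> exact Finset.sum_congr rfl fun _ _ => by ring }
  have hker : LinearMap.ker T ≤ LinearMap.ker f := by
    intro uu huu
    have huu' : uu.1 ∘ o = uu.2 ∘ i' := by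
      funext y
      have := congrFun (LinearMap.mem_ker.mp huu) y
      simpa [T, sub_eq_zero] using this
    obtain ⟨w, ⟨hw1, hw2⟩, -⟩ := huniv uu.1 uu.2 huu'
    have hfe : f uu = ∑ p, (pushR j a + pushR j' a') p * w p := by
      simp only [Pi.add_apply, add_mul, Finset.sum_add_distrib, pushR_dual]
      simp only [f, LinearMap.coe_mk, AddHom.coe_mk, ← hw1, ← hw2, Function.comp_apply]
    rw [LinearMap.mem_ker, hfe, hsum]
    simp
  obtain ⟨g, hg⟩ := exists_factor T f hker
  set O : Y → ℝ := fun y => g (Pi.single y 1) with hO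
  have keyS : ∀ s : S, a s = pushR o O s := by
    intro s
    have h1 : f (Pi.single s 1, 0) = a s := by
      simp [f, Pi.single_apply, mul_ite, Finset.sum_ite_eq']
    have h2 : g (T (Pi.single s 1, 0)) = pushR o O s := by
      rw [functional_sum]
      simp only [pushR]
      apply Finset.sum_congr rfl
      intro y _
      simp only [T, LinearMap.coe_mk, AddHom.coe_mk, Pi.zero_apply, sub_zero, Pi.single_apply]
      split <;> simp [hO]
    rw [← h1, ← hg, h2]
  have keyS' : ∀ s' : S', a' s' = -pushR i' O s' := by
    intro s'
    have h1 : f (0, Pi.single s' 1) = a' s' := by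
      simp [f, Pi.single_apply, mul_ite, Finset.sum_ite_eq']
    have h2 : g (T (0, Pi.single s' 1)) = -pushR i' O s' := by
      rw [functional_sum]
      simp only [pushR, ← Finset.sum_neg_distrib]
      apply Finset.sum_congr rfl
      intro y _
      simp only [T, LinearMap.coe_mk, AddHom.coe_mk, Pi.zero_apply, zero_sub, Pi.single_apply]
      split <;> simp [hO]
    rw [← h1, ← hg, h2]
  refine ⟨O, ?_, ?_⟩
  · funext s
    have := keyS s
    simp only [ha, Pi.add_apply, Pi.sub_apply, Pi.zero_apply] at this ⊢
    linarith
  · funext s'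
    have := keyS' s'
    simp only [ha', Pi.add_apply, Pi.sub_apply, Pi.zero_apply] at this ⊢
    linarith
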